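/- Let F be a field with char F = 3 and let A be the Matsuo algebra of the affine plane of order 3 over F. Let T be the F-span of the 12 line sums Σ_{u∈L} p_u (L ranging over the lines of the affine plane). Then every t ∈ T is an absolute zero divisor of A: for all x ∈ A, U_t(x) := 2·t(tx) − (tt)x = 0. -/
import Mathlib


open Finset

/-- The Matsuo algebra `M_{1/2}(P3)` of the affine plane of order 3 over `F`: the free
`F`-module on the point set `P = (ℤ/3)²`, with the commutative bilinear multiplication
determined by `p_u p_u = p_u` and `p_u p_v = (1/4)(p_u + p_v − p_{−u−v})` for `u ≠ v`. -/
noncomputable def mMul (F : Type*) [Field F] (x y : ZMod 3 × ZMod 3 → F) :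
    ZMod 3 × ZMod 3 → F :=
  ∑ u : ZMod 3 × ZMod 3, ∑ v : ZMod 3 × ZMod 3,
    (x u * y v) •
      (if u = v then Pi.single u (1 : F)
       else (4⁻¹ : F) • (Pi.single u (1 : F) + Pi.single v (1 : F) -
         Pi.single (-u - v) (1 : F)) : ZMod 3 × ZMod 3 → F)

/-- The sum `Σ_{u ∈ s} p_u` in the Matsuo algebra. -/
noncomputable def pSum (F : Type*) [Field F] (s : Finset (ZMod 3 × ZMod 3)) :
    ZMod 3 × ZMod 3 → F :=
  ∑ u ∈ s, Pi.single u 1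

/-- The line of the affine plane of order 3 through `a` with direction `w`
(a coset of the 1-dimensional subspace spanned by `w`). -/
def lineThru (a w : ZMod 3 × ZMod 3) : Finset (ZMod 3 × ZMod 3) :=
  Finset.image (fun t : ZMod 3 => a + t • w) Finset.univ

namespace S15

abbrev G := ZMod 3 × ZMod 3

variable {R : Type*} [CommRing R]

/-- total sum of coefficients -/
def sg (x : G → R) : R := ∑ u, x u

/-- reversal `x ↦ x ∘ (-·)` -/
def rv (x : G → R) : G → R := fun p => x (-p)

/-- convolution -/
def cv (x y : G → R) : G → R := fun p => ∑ u, x u * y (p - u)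

lemma rv_add (x y : G → R) : rv (x + y) = rv x + rv y := rfl
lemma rv_zero : rv (0 : G → R) = 0 := rfl
lemma rv_neg (x : G → R) : rv (-x) = -rv x := rfl
lemma rv_sub (x y : G → R) : rv (x - y) = rv x - rv y := rfl
lemma rv_smul (a : R) (x : G → R) : rv (a • x) = a • rv x := rfl
lemma rv_rv (x : G → R) : rv (rv x) = x := by
  funext p; simp [rv]

lemma sg_add (x y : G → R) : sg (x + y) = sg x + sg y := by
  simp [sg, Finset.sum_add_distrib]
lemma sg_smul (a : R) (x : G → R) : sg (a • x) = a * sg x := by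
  simp [sg, Finset.mul_sum]
lemma sg_neg (x : G → R) : sg (-x) = -sg x := by simp [sg]
lemma sg_rv (x : G → R) : sg (rv x) = sg x :=
  Fintype.sum_equiv (Equiv.neg G) _ _ fun u => rfl

lemma cv_comm (x y : G → R) : cv x y = cv y x := by
  funext p
  exact Fintype.sum_equiv (Equiv.subLeft p) _ _ fun u => by
    simp [Equiv.subLeft, mul_comm]

lemma cv_add_left (x y z : G → R) : cv (x + y) z = cv x z + cv y z := by
  funext p; simp [cv, add_mul, Finset.sum_add_distrib]
lemma cv_add_right (x y z : G → R) : cv x (y + z) = cv x y + cv x z := by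
  funext p; simp [cv, mul_add, Finset.sum_add_distrib]
lemma cv_smul_left (a : R) (x y : G → R) : cv (a • x) y = a • cv x y := by
  funext p; simp [cv, Finset.mul_sum, mul_assoc]
lemma cv_smul_right (a : R) (x y : G → R) : cv x (a • y) = a • cv x y := by
  funext p; simp [cv, Finset.mul_sum]; exact Finset.sum_congr rfl fun u _ => by ring
lemma cv_zero_left (y : G → R) : cv 0 y = 0 := by funext p; simp [cv]
lemma cv_zero_right (x : G → R) : cv x 0 = 0 := by funext p; simp [cv]
lemma cv_neg_left (x y : G → R) : cv (-x) y = -cv x y := by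
  funext p; simp [cv]
lemma cv_sub_right (x y z : G → R) : cv x (y - z) = cv x y - cv x z := by
  funext p; simp [cv, mul_sub, Finset.sum_sub_distrib]

lemma sg_cv (x y : G → R) : sg (cv x y) = sg x * sg y := by
  rw [sg]
  show (∑ p : G, ∑ u : G, x u * y (p - u)) = sg x * sg y
  rw [Finset.sum_comm]
  rw [sg, sg, Finset.sum_mul]
  refine Finset.sum_congr rfl fun u _ => ?_
  rw [← Finset.mul_sum]
  congr 1
  exact Fintype.sum_equiv (Equiv.subRight u) _ _ fun p => rfl

lemma rv_cv (x y : G → R) : rv (cv x y) = cv (rv x) (rv y) := by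
  funext p
  show ∑ u, x u * y (-p - u) = ∑ u, x (-u) * y (-(p - u))
  exact Fintype.sum_equiv (Equiv.neg G) _ _ fun u => by
    rw [Equiv.neg_apply, neg_neg, show (-(p - -u) : G) = -p - u by ring]

lemma cv_assoc (x y z : G → R) : cv (cv x y) z = cv x (cv y z) := by
  funext p
  show ∑ u, (∑ v, x v * y (u - v)) * z (p - u) = ∑ v, x v * ∑ w, y w * z (p - v - w)
  have : ∀ u, (∑ v, x v * y (u - v)) * z (p - u) = ∑ v, x v * (y (u - v) * z (p - u)) := by
    intro u; rw [Finset.sum_mul]; exact Finset.sum_congr rfl fun v _ => by ring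
  simp_rw [this]
  rw [Finset.sum_comm]
  refine Finset.sum_congr rfl fun v _ => ?_
  rw [← Finset.mul_sum]
  congr 1
  refine Fintype.sum_equiv (Equiv.subRight v) _ _ fun u => ?_
  rw [Equiv.subRight_apply, show (p - v - (u - v) : G) = p - u by ring]

lemma cv_const_one (x : G → R) : cv (fun _ => (1 : R)) x = fun _ => sg x := by
  funext p
  show ∑ u, 1 * x (p - u) = ∑ u, x u
  refine Fintype.sum_equiv (Equiv.subLeft p) _ _ fun u => ?_
  simp [Equiv.subLeft]

/-- translation -/
def tr (a : G) (x : G → R) : G → R := fun p => x (p - a)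

lemma cv_tr (a b : G) (x y : G → R) : cv (tr a x) (tr b y) = tr (a + b) (cv x y) := by
  funext p
  show ∑ u, x (u - a) * y (p - u - b) = ∑ v, x v * y (p - (a + b) - v)
  refine Fintype.sum_equiv (Equiv.subRight a) _ _ fun u => ?_
  rw [Equiv.subRight_apply, show (p - (a + b) - (u - a) : G) = p - u - b by ring]

/-- indicator of the line through `a` with direction `w`, over `ZMod 3` -/
def pZ (a w : G) : G → ZMod 3 := fun p => if ∃ t : ZMod 3, p = a + t • w then 1 else 0

lemma Z1 : ∀ a w : G, w ≠ 0 → sg (pZ a w) = 0 := by decide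
lemma Z2 : ∀ a w : G, rv (pZ a w) = pZ (-a) w := by decide
lemma Z3 : ∀ w w' : G, w ≠ 0 → w' ≠ 0 →
    cv (pZ 0 w) (pZ 0 w') =
      (if ∃ s : ZMod 3, w' = s • w then 0 else fun _ => (1 : ZMod 3)) := by decide
lemma Ztr : ∀ a w : G, pZ a w = tr a (pZ 0 w) := by decide

lemma CZ (a b w w' : G) (hw : w ≠ 0) (hw' : w' ≠ 0) :
    cv (pZ a w) (pZ b w') =
      (if ∃ s : ZMod 3, w' = s • w then 0 else fun _ => (1 : ZMod 3)) := by
  rw [Ztr a w, Ztr b w', cv_tr, Z3 w w' hw hw']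
  split_ifs <;> funext p <;> simp [tr]

section Field
variable {F : Type*} [Field F] [CharP F 3]

/-- coefficientwise cast `ZMod 3 → F` -/
def mp (z : G → ZMod 3) : G → F := fun p => ZMod.castHom (dvd_refl 3) F (z p)

lemma mp_cv (x y : G → ZMod 3) : cv (mp (F := F) x) (mp y) = mp (cv x y) := by
  funext p
  simp [cv, mp, map_sum]

lemma mp_rv (x : G → ZMod 3) : rv (mp (F := F) x) = mp (rv x) := rfl

lemma mp_sg (x : G → ZMod 3) : sg (mp (F := F) x) = ZMod.castHom (dvd_refl 3) F (sg x) := by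
  simp [sg, mp, map_sum]

lemma mp_zero : mp (F := F) 0 = 0 := by funext p; simp [mp]

lemma mp_one : mp (F := F) (fun _ => 1) = fun _ => 1 := by funext p; simp [mp]

lemma pSum_line (a w : G) : pSum F (lineThru a w) = mp (pZ a w) := by
  funext p
  rw [pSum, Finset.sum_apply]
  have h1 : ∀ u : G, (Pi.single u 1 : G → F) p = if p = u then 1 else 0 := fun u => by
    simp [Pi.single_apply]
  simp_rw [h1]
  rw [Finset.sum_ite_eq (lineThru a w) p (fun _ => (1 : F))]
  have hmem : p ∈ lineThru a w ↔ ∃ t : ZMod 3, p = a + t • w := by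
    simp [lineThru, eq_comm]
  simp only [mp, pZ]
  rw [if_congr hmem rfl rfl]
  split_ifs <;> simp

lemma mul_formula (x y : G → F) :
    mMul F x y = sg y • x + sg x • y - rv (cv x y) := by
  have h4 : (4 : F)⁻¹ = 1 := by
    have h3 : (3 : F) = 0 := by exact_mod_cast CharP.cast_eq_zero F 3
    have : (4 : F) = 1 := by linear_combination h3
    rw [this, inv_one]
  have huu : ∀ u : G, -u - u = u := by decide
  have hcond : ∀ p u v : G, (p = -u - v) ↔ (v = -u - p) := by decide
  funext p
  rw [mMul]
  rw [Finset.sum_apply]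
  simp_rw [Finset.sum_apply]
  have hterm : ∀ u v : G,
      ((x u * y v) •
        (if u = v then Pi.single u (1 : F)
         else (4⁻¹ : F) • (Pi.single u (1 : F) + Pi.single v (1 : F) -
           Pi.single (-u - v) (1 : F)) : G → F)) p
      = x u * y v * ((Pi.single u 1 : G → F) p + (Pi.single v 1 : G → F) p
          - (Pi.single (-u - v) 1 : G → F) p) := by
    intro u v
    by_cases huv : u = v
    · subst huv
      rw [if_pos rfl, huu u]
      simp only [Pi.smul_apply, smul_eq_mul, Pi.single_apply]
      split_ifs <;> ring
    · rw [if_neg huv, h4, one_smul]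
      simp only [Pi.smul_apply, smul_eq_mul, Pi.sub_apply, Pi.add_apply, Pi.single_apply]
      try split_ifs <;> ring
  simp_rw [hterm]
  have expand : ∀ u v : G,
      x u * y v * ((Pi.single u 1 : G → F) p + (Pi.single v 1 : G → F) p
          - (Pi.single (-u-v) 1 : G → F) p)
      = x u * y v * (Pi.single u 1 : G → F) p + x u * y v * (Pi.single v 1 : G → F) p
        - x u * y v * (Pi.single (-u-v) 1 : G → F) p := fun u v => by ring
  simp_rw [expand, Finset.sum_sub_distrib, Finset.sum_add_distrib]
  have t1 : ∑ u : G, ∑ v : G, x u * y v * (Pi.single u 1 : G → F) p = sg y * x p := by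
    have h : ∀ u : G, ∑ v : G, x u * y v * (Pi.single u 1 : G → F) p
        = (x u * (Pi.single u 1 : G → F) p) * sg y := by
      intro u; rw [sg, Finset.mul_sum]; exact Finset.sum_congr rfl fun v _ => by ring
    simp_rw [h]
    rw [← Finset.sum_mul]
    have h2 : ∑ u : G, x u * (Pi.single u 1 : G → F) p = x p := by
      simp_rw [Pi.single_apply, mul_ite, mul_one, mul_zero]
      rw [Finset.sum_ite_eq univ p x]
      simp
    rw [h2]; ring
  have t2 : ∑ u : G, ∑ v : G, x u * y v * (Pi.single v 1 : G → F) p = sg x * y p := by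
    have h : ∀ u : G, ∑ v : G, x u * y v * (Pi.single v 1 : G → F) p = x u * y p := by
      intro u
      simp_rw [Pi.single_apply, mul_ite, mul_one, mul_zero]
      rw [Finset.sum_ite_eq univ p (fun v => x u * y v)]
      simp
    simp_rw [h]
    rw [← Finset.sum_mul, sg]
  have t3 : ∑ u : G, ∑ v : G, x u * y v * (Pi.single (-u-v) 1 : G → F) p
      = rv (cv x y) p := by
    have h : ∀ u : G, ∑ v : G, x u * y v * (Pi.single (-u-v) 1 : G → F) p
        = x u * y (-u - p) := by
      intro u
      simp_rw [Pi.single_apply, mul_ite, mul_one, mul_zero, hcond]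
      rw [Finset.sum_ite_eq' univ (-u-p) (fun v => x u * y v)]
      simp
    simp_rw [h]
    show _ = ∑ u : G, x u * y (-p - u)
    exact Finset.sum_congr rfl fun u _ => by rw [show -u - p = -p - u by ring]
  rw [t1, t2, t3]
  simp only [Pi.add_apply, Pi.sub_apply, Pi.smul_apply, smul_eq_mul]
  try ring

lemma sg_sub' (x y : G → F) : sg (x - y) = sg x - sg y := by
  simp [sg, Finset.sum_sub_distrib]

lemma sg_mul (x y : G → F) : sg (mMul F x y) = sg x * sg y := by
  rw [mul_formula, sg_sub', sg_add, sg_smul, sg_smul, sg_rv, sg_cv]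
  ring

/-- the generating set of line sums -/
def LS : Set (G → F) :=
  {x : G → F | ∃ a w : G, w ≠ 0 ∧ x = pSum F (lineThru a w)}

lemma sg_T {t : G → F} (ht : t ∈ Submodule.span F (LS (F := F))) : sg t = 0 := by
  induction ht using Submodule.span_induction with
  | mem x hx =>
    obtain ⟨a, w, hw, rfl⟩ := hx
    rw [pSum_line, mp_sg, Z1 a w hw, map_zero]
  | zero => simp [sg]
  | add x y _ _ hx hy => rw [sg_add, hx, hy, add_zero]
  | smul a x _ hx => rw [sg_smul, hx, mul_zero]

lemma rv_T {t : G → F} (ht : t ∈ Submodule.span F (LS (F := F))) :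
    rv t ∈ Submodule.span F (LS (F := F)) := by
  induction ht using Submodule.span_induction with
  | mem x hx =>
    obtain ⟨a, w, hw, rfl⟩ := hx
    rw [pSum_line, mp_rv, Z2]
    rw [← pSum_line]
    exact Submodule.subset_span ⟨-a, w, hw, rfl⟩
  | zero => rw [rv_zero]; exact Submodule.zero_mem _
  | add x y _ _ hx hy => rw [rv_add]; exact Submodule.add_mem _ hx hy
  | smul a x _ hx => rw [rv_smul]; exact Submodule.smul_mem _ _ hx

lemma cv_gen (a b w w' : G) (hw : w ≠ 0) (hw' : w' ≠ 0) :
    cv (pSum F (lineThru a w)) (pSum F (lineThru b w'))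
      = (if ∃ s : ZMod 3, w' = s • w then 0 else fun _ => (1 : F)) := by
  rw [pSum_line, pSum_line, mp_cv, CZ a b w w' hw hw']
  split_ifs
  · exact mp_zero
  · exact mp_one

lemma K1 {s t : G → F} (hs : s ∈ Submodule.span F (LS (F := F)))
    (ht : t ∈ Submodule.span F (LS (F := F))) : cv (rv s) t = cv s t := by
  induction hs, ht using Submodule.span_induction₂ with
  | mem_mem x y hx hy =>
    obtain ⟨a, w, hw, rfl⟩ := hx
    obtain ⟨b, w', hw', rfl⟩ := hy
    have h1 : rv (pSum F (lineThru a w)) = pSum F (lineThru (-a) w) := by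
      rw [pSum_line, mp_rv, Z2, ← pSum_line]
    rw [h1, cv_gen (-a) b w w' hw hw', cv_gen a b w w' hw hw']
  | zero_left y hy => rw [rv_zero]
  | zero_right x hx => rw [cv_zero_right, cv_zero_right]
  | add_left x y z _ _ _ h1 h2 => rw [rv_add, cv_add_left, cv_add_left, h1, h2]
  | add_right x y z _ _ _ h1 h2 => rw [cv_add_right, cv_add_right, h1, h2]
  | smul_left r x y _ _ h => rw [rv_smul, cv_smul_left, cv_smul_left, h]
  | smul_right r x y _ _ h => rw [cv_smul_right, cv_smul_right, h]

lemma K2 {s t : G → F} (hs : s ∈ Submodule.span F (LS (F := F)))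
    (ht : t ∈ Submodule.span F (LS (F := F))) (x : G → F) :
    cv (cv s t) x = sg x • cv s t := by
  induction hs, ht using Submodule.span_induction₂ with
  | mem_mem y z hy hz =>
    obtain ⟨a, w, hw, rfl⟩ := hy
    obtain ⟨b, w', hw', rfl⟩ := hz
    rw [cv_gen a b w w' hw hw']
    split_ifs
    · rw [cv_zero_left, smul_zero]
    · rw [cv_const_one]
      funext p
      simp [smul_eq_mul]
  | zero_left y hy => rw [cv_zero_left, cv_zero_left, smul_zero]
  | zero_right y hy => rw [cv_zero_right, cv_zero_left, smul_zero]
  | add_left a b c _ _ _ h1 h2 =>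
      rw [cv_add_left, cv_add_left, h1, h2, smul_add]
  | add_right a b c _ _ _ h1 h2 =>
      rw [cv_add_right, cv_add_left, h1, h2, smul_add]
  | smul_left r a b _ _ h =>
      rw [cv_smul_left, cv_smul_left, h, smul_comm]
  | smul_right r a b _ _ h =>
      rw [cv_smul_right, cv_smul_left, h, smul_comm]

end Field

end S15

/-- For `char F = 3`, every element `t` of the span `T` of the 12 line sums
of the Matsuo algebra of the affine plane of order 3 is an absolute zero divisor:
`U_t(x) = 2·t(tx) − (tt)x = 0` for all `x`. -/
theorem stmt_15 (F : Type*) [Field F] [CharP F 3] :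
    ∀ t ∈ Submodule.span F
        {x : ZMod 3 × ZMod 3 → F | ∃ a w : ZMod 3 × ZMod 3, w ≠ 0 ∧ x = pSum F (lineThru a w)},
      ∀ x : ZMod 3 × ZMod 3 → F,
        (2 : F) • mMul F t (mMul F t x) - mMul F (mMul F t t) x = 0 := by
  intro t ht x
  open S15 in
  have ht : t ∈ Submodule.span F (S15.LS (F := F)) := ht
  have hst : sg t = 0 := sg_T ht
  have hrt : rv t ∈ Submodule.span F (S15.LS (F := F)) := rv_T ht
  -- m t z = sg z • t - rv (cv t z)
  have hm : ∀ z : G → F, mMul F t z = sg z • t - rv (cv t z) := by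
    intro z
    rw [mul_formula, hst, zero_smul, add_zero]
  -- rv (cv t t) = cv t t
  have hrctt : rv (cv t t) = cv t t := by
    rw [rv_cv]
    rw [K1 ht hrt, cv_comm, K1 ht ht]
  -- t (t x) = 0
  have h3 : mMul F t (mMul F t x) = 0 := by
    rw [hm (mMul F t x)]
    have h2 : sg (mMul F t x) = 0 := by rw [sg_mul, hst, zero_mul]
    rw [h2, zero_smul, zero_sub]
    have hc : cv t (mMul F t x) = 0 := by
      rw [hm x, cv_sub_right, cv_smul_right]
      have : cv t (rv (cv t x)) = sg x • cv t t := by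
        rw [rv_cv, ← cv_assoc, cv_comm t (rv t), K1 ht ht, K2 ht ht, sg_rv]
      rw [this, sub_self]
    rw [hc, rv_zero, neg_zero]
  -- (t t) x = 0
  have h4 : mMul F (mMul F t t) x = 0 := by
    have htt : mMul F t t = -cv t t := by
      rw [hm t, hst, zero_smul, zero_sub, hrctt]
    rw [htt, mul_formula]
    have hsg : sg (-cv t t : G → F) = 0 := by
      rw [sg_neg, sg_cv, hst, zero_mul, neg_zero]
    rw [hsg, zero_smul, add_zero, cv_neg_left, rv_neg]
    rw [K2 ht ht x, rv_smul, hrctt]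
    module
  rw [h3, h4, smul_zero, sub_zero]
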